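/- Every linear map W ∈ ℝ^{PQ×PQ} equivariant to the imprimitive action of K ≀ H on P × Q can be written as W = W_H ⊗ (1_Q 1_Q^⊤) + I_P ⊗ W_K for some H-equivariant W_H ∈ ℝ^{P×P} and K-equivariant W_K ∈ ℝ^{Q×Q}, assuming the H-action on P and the K-action on Q are transitive. -/

import Mathlib

open Matrix Kronecker

/-- Permutation matrix of `σ` (row convention matching `(Γ^(g)x)_n = x_{g·n}`):
entry `(i,j)` is 1 iff `j = σ i`. -/
noncomputable def permMat {n : Type*} [Fintype n] [DecidableEq n] (σ : Equiv.Perm n) :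
    Matrix n n ℝ := Matrix.of fun i j => if j = σ i then (1 : ℝ) else 0

/-- The permutation matrix `G^(g) = Σ_{p=1}^P 1_{p, h·p} ⊗ G^{(k_p)}` of the imprimitive
action of the wreath product element `g = (h, (k_p)_p) ∈ K ≀ H` on `ℝ^{PQ}`. -/
noncomputable def wreathMat {H P K Q : Type*} [Group H] [Group K]
    [Fintype P] [DecidableEq P] [Fintype Q] [DecidableEq Q]
    (ρ : H →* Equiv.Perm P) (τ : K →* Equiv.Perm Q) (h : H) (b : P → K) :
    Matrix (P × Q) (P × Q) ℝ :=
  ∑ p : P, (Matrix.single p (ρ h p) (1 : ℝ)) ⊗ₖ permMat (τ (b p))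

lemma permMat_mul_apply {n : Type*} [Fintype n] [DecidableEq n] (σ : Equiv.Perm n)
    (W : Matrix n n ℝ) (i j : n) : (permMat σ * W) i j = W (σ i) j := by
  simp [permMat, Matrix.mul_apply]

lemma mul_permMat_apply {n : Type*} [Fintype n] [DecidableEq n] (σ : Equiv.Perm n)
    (W : Matrix n n ℝ) (i j : n) : (W * permMat σ) i j = W i (σ.symm j) := by
  simp only [permMat, Matrix.mul_apply, Matrix.of_apply, mul_ite, mul_one, mul_zero]
  rw [Finset.sum_eq_single (σ.symm j)]
  · simp
  · intro b _ hb; rw [if_neg]; intro h; exact hb (by rw [h]; simp)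
  · intro h; exact absurd (Finset.mem_univ _) h

lemma permMat_comm_of {n : Type*} [Fintype n] [DecidableEq n] (σ : Equiv.Perm n)
    (W : Matrix n n ℝ) (hc : ∀ i j, W (σ i) (σ j) = W i j) :
    permMat σ * W = W * permMat σ := by
  ext i j
  rw [permMat_mul_apply, mul_permMat_apply]
  have := hc i (σ.symm j)
  rwa [Equiv.apply_symm_apply] at this

/-- The wreath permutation on `P × Q`. -/
noncomputable def wreathPerm {H P K Q : Type*} [Group H] [Group K]
    (ρ : H →* Equiv.Perm P) (τ : K →* Equiv.Perm Q) (h : H) (b : P → K) :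
    Equiv.Perm (P × Q) where
  toFun := fun x => (ρ h x.1, τ (b x.1) x.2)
  invFun := fun x => ((ρ h).symm x.1, (τ (b ((ρ h).symm x.1))).symm x.2)
  left_inv := by intro x; simp
  right_inv := by intro x; simp

lemma wreathMat_eq_permMat {H P K Q : Type*} [Group H] [Group K]
    [Fintype P] [DecidableEq P] [Fintype Q] [DecidableEq Q]
    (ρ : H →* Equiv.Perm P) (τ : K →* Equiv.Perm Q) (h : H) (b : P → K) :
    wreathMat ρ τ h b = permMat (wreathPerm ρ τ h b) := by
  ext ⟨p, q⟩ ⟨p', q'⟩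
  simp only [wreathMat, Matrix.sum_apply, Matrix.kroneckerMap_apply,
    Matrix.single, permMat, wreathPerm, Matrix.of_apply, Equiv.coe_fn_mk,
    Prod.mk.injEq, Prod.ext_iff]
  rw [Finset.sum_eq_single p]
  · by_cases h1 : p' = ρ h p <;> by_cases h2 : q' = τ (b p) q <;>
      simp [h1, h2, eq_comm]
  · intro r _ hr
    have h1 : ¬(p = r ∧ p' = ρ h r) := fun hc => hr hc.1.symm
    split_ifs <;> simp_all
  · intro hc; exact absurd (Finset.mem_univ _) hc

/-- Assuming the `H`-action on `P` and the `K`-action on `Q` are transitive, every linear map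
`W ∈ ℝ^{PQ×PQ}` equivariant to the imprimitive action of `K ≀ H` on `P × Q` can be written as
`W = W_H ⊗ (1_Q 1_Q^⊤) + I_P ⊗ W_K` with `W_H` `H`-equivariant and `W_K` `K`-equivariant. -/
theorem wreath_equivariant_decomposition
    {H P K Q : Type*} [Group H] [Group K]
    [Fintype P] [DecidableEq P] [Nonempty P] [Fintype Q] [DecidableEq Q] [Nonempty Q]
    (ρ : H →* Equiv.Perm P) (τ : K →* Equiv.Perm Q)
    (hHtrans : ∀ p p' : P, ∃ h : H, ρ h p = p')
    (hKtrans : ∀ q q' : Q, ∃ k : K, τ k q = q')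
    (W : Matrix (P × Q) (P × Q) ℝ)
    (hW : ∀ (h : H) (b : P → K), wreathMat ρ τ h b * W = W * wreathMat ρ τ h b) :
    ∃ (WH : Matrix P P ℝ) (WK : Matrix Q Q ℝ),
      (∀ h : H, permMat (ρ h) * WH = WH * permMat (ρ h)) ∧
      (∀ k : K, permMat (τ k) * WK = WK * permMat (τ k)) ∧
      W = WH ⊗ₖ vecMulVec (fun _ : Q => (1 : ℝ)) (fun _ : Q => (1 : ℝ)) +
            (1 : Matrix P P ℝ) ⊗ₖ WK := by
  -- key invariance relation
  have key : ∀ (h : H) (b : P → K) (p p' : P) (q q' : Q),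
      W (ρ h p, τ (b p) q) (ρ h p', τ (b p') q') = W (p, q) (p', q') := by
    intro h b p p' q q'
    have hc := hW h b
    rw [wreathMat_eq_permMat] at hc
    have := congrFun (congrFun hc (p, q)) (wreathPerm ρ τ h b (p', q'))
    rw [permMat_mul_apply, mul_permMat_apply, Equiv.symm_apply_apply] at this
    exact this
  obtain ⟨p₀⟩ := ‹Nonempty P›
  obtain ⟨q₀⟩ := ‹Nonempty Q›
  refine ⟨fun p p' => if p = p' then 0 else W (p, q₀) (p', q₀),
    fun q q' => W (p₀, q) (p₀, q'), ?_, ?_, ?_⟩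
  · -- H-equivariance of WH
    intro h
    apply permMat_comm_of
    intro p p'
    by_cases hpp : p = p'
    · simp [hpp]
    · have h2 : ρ h p ≠ ρ h p' := fun hc => hpp ((ρ h).injective hc)
      simp only [if_neg hpp, if_neg h2]
      have := key h (fun _ => 1) p p' q₀ q₀
      simpa using this
  · -- K-equivariance of WK
    intro k
    apply permMat_comm_of
    intro q q'
    have := key 1 (fun _ => k) p₀ p₀ q q'
    simpa using this
  · -- decomposition
    ext ⟨p, q⟩ ⟨p', q'⟩
    simp only [Matrix.add_apply, Matrix.kroneckerMap_apply, Matrix.kroneckerMap, Matrix.of_apply,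
      vecMulVec_apply, Matrix.one_apply, mul_one]
    by_cases hpp : p = p'
    · subst hpp
      simp only [if_pos rfl, one_mul, zero_mul, zero_add]
      obtain ⟨h, hh⟩ := hHtrans p₀ p
      have := key h (fun _ => 1) p₀ p₀ q q'
      rw [hh] at this
      simpa using this
    · simp only [if_neg hpp, zero_mul, add_zero, mul_one]
      obtain ⟨k, hk⟩ := hKtrans q q₀
      obtain ⟨k', hk'⟩ := hKtrans q' q₀
      have := key 1 (fun x => if x = p then k else k') p p' q q'
      simp only [_root_.map_one, Equiv.Perm.coe_one, id_eq, if_pos rfl, if_true,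
        if_neg (Ne.symm hpp)] at this
      rw [hk, hk'] at this
      exact this.symm
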